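/- (Equilibrium implies social optimality, deterministic finite-dimensional version.) Let X be a real Hilbert space, V_i : X → ℝ convex for i = 1,…,N, K_i ⊆ X nonempty convex sets, φ : X → ℝ convex Fréchet differentiable, and F : X → X with F(z) = (1/N)φ'(z) for all z. Suppose (x₁*,…,x_N*) ∈ K₁×⋯×K_N and y* ∈ X satisfy: y* = F(m*) with m* = (1/N)∑ x_i*, and each x_i* minimizes x ↦ V_i(x) + ⟨y*, x⟩ over K_i. Then (x₁*,…,x_N*) minimizes ∑_{i=1}^N V_i(x_i) + φ((1/N)∑ x_i) over K₁×⋯×K_N. -/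

import Mathlib

open scoped RealInnerProductSpace BigOperators

lemma grad_subgradient {X : Type*} [NormedAddCommGroup X] [InnerProductSpace ℝ X] [CompleteSpace X]
    {φ : X → ℝ} (hφ : ConvexOn ℝ Set.univ φ) {g w : X}
    (hg : HasGradientAt φ g w) (v : X) :
    φ w + ⟪g, v - w⟫ ≤ φ v := by
  set L : ℝ → X := fun t => w + t • (v - w) with hL
  have hline : ∀ t : ℝ, HasDerivAt L (v - w) t := by
    intro t
    simpa [hL] using ((hasDerivAt_id t).smul_const (v - w)).const_add w
  have hLeq : L = fun t => (AffineMap.lineMap w v : ℝ →ᵃ[ℝ] X) t := by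
    funext t
    simp only [hL, AffineMap.lineMap_apply_module]
    module
  have hψ : ConvexOn ℝ Set.univ (φ ∘ L) := by
    rw [hLeq]
    have := hφ.comp_affineMap (AffineMap.lineMap w v : ℝ →ᵃ[ℝ] X)
    simpa using this
  have hd : HasDerivAt (φ ∘ L) ⟪g, v - w⟫ 0 := by
    have hf : HasFDerivAt φ (InnerProductSpace.toDual ℝ X g : X →L[ℝ] ℝ) (L 0) := by
      simpa [hL] using (hasGradientAt_iff_hasFDerivAt).mp hg
    have : HasDerivAt (φ ∘ L) ((InnerProductSpace.toDual ℝ X g) (v - w)) 0 := by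
      exact hf.comp_hasDerivAt (x := (0:ℝ)) (hline 0)
    simpa [InnerProductSpace.toDual_apply_apply] using this
  have hslope := hψ.le_slope_of_hasDerivAt (Set.mem_univ 0) (Set.mem_univ 1)
    one_pos hd
  rw [slope_def_field] at hslope
  simp [hL] at hslope
  linarith

theorem stmt13 {X : Type*} [NormedAddCommGroup X] [InnerProductSpace ℝ X] [CompleteSpace X]
    {N : ℕ} (hN : 0 < N)
    {V : Fin N → X → ℝ} (hV : ∀ i, ConvexOn ℝ Set.univ (V i))
    {K : Fin N → Set X} (hKne : ∀ i, (K i).Nonempty) (hKconv : ∀ i, Convex ℝ (K i))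
    {φ : X → ℝ} (hφ : ConvexOn ℝ Set.univ φ) {φ' : X → X}
    (hgrad : ∀ z, HasGradientAt φ (φ' z) z)
    {F : X → X} (hFφ : ∀ z, F z = (N : ℝ)⁻¹ • φ' z)
    {xs : Fin N → X} (hxs : ∀ i, xs i ∈ K i)
    {y : X} (hy : y = F ((N : ℝ)⁻¹ • ∑ j, xs j))
    (hbr : ∀ i, ∀ x ∈ K i, V i (xs i) + ⟪y, xs i⟫ ≤ V i x + ⟪y, x⟫) :
    ∀ z : Fin N → X, (∀ i, z i ∈ K i) →
      (∑ i, V i (xs i)) + φ ((N : ℝ)⁻¹ • ∑ i, xs i) ≤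
        (∑ i, V i (z i)) + φ ((N : ℝ)⁻¹ • ∑ i, z i) := by
  intro z hz
  have hN' : (N : ℝ) ≠ 0 := Nat.cast_ne_zero.mpr hN.ne'
  set m : X := (N : ℝ)⁻¹ • ∑ i, xs i with hm
  set mz : X := (N : ℝ)⁻¹ • ∑ i, z i with hmz
  have key : φ m + ⟪φ' m, mz - m⟫ ≤ φ mz := grad_subgradient hφ (hgrad m) mz
  have hy' : φ' m = (N : ℝ) • y := by
    rw [hy, hFφ, smul_smul, mul_inv_cancel₀ hN', one_smul]
  have h1 : ⟪φ' m, mz - m⟫ = (∑ i, ⟪y, z i⟫) - ∑ i, ⟪y, xs i⟫ := by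
    rw [hy', real_inner_smul_left, inner_sub_right, hm, hmz,
      real_inner_smul_right, real_inner_smul_right, inner_sum, inner_sum]
    field_simp
  have hsum : (∑ i, V i (xs i)) + ∑ i, ⟪y, xs i⟫ ≤ (∑ i, V i (z i)) + ∑ i, ⟪y, z i⟫ := by
    rw [← Finset.sum_add_distrib, ← Finset.sum_add_distrib]
    exact Finset.sum_le_sum fun i _ => hbr i (z i) (hz i)
  linarith [key, h1.symm ▸ key]
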